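/- For every integer b ≥ 1, reals 0 < m ≤ M, and every price sequence σ of length n ≥ 1 with all prices in [m, M], there exists i with 1 ≤ i ≤ 2^b such that max_k σ k ≤ (M/m)^{1/(2^b+1)} · profit(RPP(m^{(2^b+1−i)/(2^b+1)} · M^{i/(2^b+1)}), σ). (Hence b advice bits suffice to achieve competitive ratio (M/m)^{1/(2^b+1)} for online search, even when n is unknown.) -/

import Mathlib

/-- The maximum price of a price sequence of positive length. -/
noncomputable def maxPrice {n : ℕ} (hn : 0 < n) (σ : Fin n → ℝ) : ℝ :=
  Finset.univ.sup' ⟨⟨0, hn⟩, Finset.mem_univ _⟩ σ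

/-- The profit of the reservation-price strategy `RPP p` on the price sequence
`σ`: it accepts at the least index `k` with `σ k ≥ p`, obtaining `σ k`; if no
such index exists it must accept the last price `σ (n-1)`. -/
noncomputable def rppProfit {n : ℕ} (hn : 0 < n) (p : ℝ) (σ : Fin n → ℝ) : ℝ :=
  if h : ∃ k : Fin n, p ≤ σ k then
    σ ((Finset.univ.filter (fun k : Fin n => p ≤ σ k)).min'
      (h.imp fun k hk => Finset.mem_filter.mpr ⟨Finset.mem_univ _, hk⟩))
  else σ ⟨n - 1, Nat.sub_lt hn one_pos⟩

/-- For every `b ≥ 1`, reals `0 < m ≤ M`, and every price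
sequence `σ` with prices in `[m, M]`, some reservation-price strategy among
`RPP(m^{(2^b+1-i)/(2^b+1)} M^{i/(2^b+1)})`, `1 ≤ i ≤ 2^b`, achieves competitive
ratio at most `(M/m)^{1/(2^b+1)}` on `σ`. Hence `b` advice bits suffice to be
`(M/m)^{1/(2^b+1)}`-competitive, even when `n` is unknown. -/
theorem advice_upper_bound_c_competitive
    (b : ℕ) (hb : 1 ≤ b) (m M : ℝ) (hm : 0 < m) (hmM : m ≤ M)
    (n : ℕ) (hn : 0 < n) (σ : Fin n → ℝ) (hσ : ∀ i, m ≤ σ i ∧ σ i ≤ M) :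
    ∃ i : ℕ, 1 ≤ i ∧ i ≤ 2 ^ b ∧
      maxPrice hn σ ≤ (M / m) ^ ((1 : ℝ) / (2 ^ b + 1)) *
        rppProfit hn
          (m ^ ((2 ^ b + 1 - (i : ℝ)) / (2 ^ b + 1)) * M ^ ((i : ℝ) / (2 ^ b + 1))) σ := by
  classical
  set T : ℝ := 2 ^ b + 1 with hT
  have hT0 : (0:ℝ) < T := by positivity
  have hTne : T ≠ 0 := ne_of_gt hT0
  set r : ℝ := M / m with hr
  have hr1 : 1 ≤ r := (one_le_div hm).mpr hmM
  have hr0 : 0 < r := lt_of_lt_of_le one_pos hr1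
  set c : ℝ := r ^ ((1:ℝ)/T) with hc
  have hc0 : 0 < c := Real.rpow_pos_of_pos hr0 _
  set p : ℕ → ℝ := fun i => m * r ^ ((i:ℝ)/T) with hp
  have hM : M = m * r := by rw [hr, mul_div_assoc', mul_comm, mul_div_assoc, div_self hm.ne', mul_one]
  have hpeq : ∀ i : ℕ, m ^ ((T - (i:ℝ))/T) * M ^ ((i:ℝ)/T) = p i := by
    intro i
    calc m ^ ((T - (i:ℝ))/T) * M ^ ((i:ℝ)/T)
        = m ^ ((T - (i:ℝ))/T) * (m ^ ((i:ℝ)/T) * r ^ ((i:ℝ)/T)) := by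
          rw [hM, Real.mul_rpow hm.le hr0.le]
      _ = (m ^ ((T - (i:ℝ))/T) * m ^ ((i:ℝ)/T)) * r ^ ((i:ℝ)/T) := by ring
      _ = m ^ (((T - (i:ℝ))/T) + ((i:ℝ)/T)) * r ^ ((i:ℝ)/T) := by
          rw [Real.rpow_add hm]
      _ = m * r ^ ((i:ℝ)/T) := by
          rw [show ((T - (i:ℝ))/T) + ((i:ℝ)/T) = 1 by field_simp; ring, Real.rpow_one]
  have hstep : ∀ i : ℕ, c * p i = p (i+1) := by
    intro i
    simp only [hp, hc]
    push_cast
    rw [show ((i:ℝ)+1)/T = 1/T + (i:ℝ)/T by ring, Real.rpow_add hr0]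
    ring
  have htop : p (2^b + 1) = M := by
    have h1 : ((2^b + 1 : ℕ) : ℝ) = T := by push_cast [hT]; ring
    simp only [hp, h1, div_self hTne, Real.rpow_one]
    exact hM.symm
  obtain ⟨kstar, -, hkstar⟩ := Finset.exists_mem_eq_sup'
    (⟨⟨0, hn⟩, Finset.mem_univ _⟩ : Finset.univ.Nonempty) σ
  have hle_max : ∀ k, σ k ≤ maxPrice hn σ := fun k => Finset.le_sup' σ (Finset.mem_univ k)
  have hmaxM : maxPrice hn σ ≤ M := by rw [maxPrice, hkstar]; exact (hσ kstar).2
  by_cases hcase : p 1 ≤ maxPrice hn σ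
  · -- pick greatest i with p i ≤ max
    set i := Nat.findGreatest (fun i => p i ≤ maxPrice hn σ) (2^b) with hi
    have hi1 : 1 ≤ i := Nat.le_findGreatest Nat.one_le_two_pow hcase
    have hi2 : i ≤ 2^b := Nat.findGreatest_le _
    have hpi : p i ≤ maxPrice hn σ := by rw [hi]; exact Nat.findGreatest_spec (P := fun j => p j ≤ maxPrice hn σ) Nat.one_le_two_pow hcase
    have hup : maxPrice hn σ ≤ p (i+1) := by
      rcases eq_or_lt_of_le hi2 with heq | hlt
      · rw [heq, htop]; exact hmaxM
      · have := Nat.findGreatest_is_greatest (lt_add_one i) hlt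
        exact (not_le.mp this).le
    refine ⟨i, hi1, hi2, ?_⟩
    rw [hpeq]
    have hex : ∃ k : Fin n, p i ≤ σ k := ⟨kstar, by rw [← hkstar]; exact hpi⟩
    rw [rppProfit, dif_pos hex]
    have hmem := Finset.min'_mem (Finset.univ.filter (fun k : Fin n => p i ≤ σ k))
      (hex.imp fun k hk => Finset.mem_filter.mpr ⟨Finset.mem_univ _, hk⟩)
    have hprofit : p i ≤ σ _ := (Finset.mem_filter.mp hmem).2
    calc maxPrice hn σ ≤ p (i+1) := hup
      _ = c * p i := (hstep i).symm
      _ ≤ c * _ := mul_le_mul_of_nonneg_left hprofit hc0.le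
  · refine ⟨1, le_refl 1, Nat.one_le_two_pow, ?_⟩
    have h1 : ((1:ℕ):ℝ) = (1:ℝ) := by norm_num
    rw [show ((2:ℝ)^b + 1 - ((1:ℕ):ℝ))/(2^b+1) = (T - ((1:ℕ):ℝ))/T from rfl]
    rw [hpeq 1]
    have hnoex : ¬ ∃ k : Fin n, p 1 ≤ σ k := by
      rintro ⟨k, hk⟩
      exact hcase (le_trans hk (hle_max k))
    rw [rppProfit, dif_neg hnoex]
    have hlast : m ≤ σ ⟨n - 1, Nat.sub_lt hn one_pos⟩ := (hσ _).1
    have hp0 : p 0 = m := by simp [hp]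
    calc maxPrice hn σ ≤ p 1 := (not_le.mp hcase).le
      _ = c * p 0 := (hstep 0).symm
      _ = c * m := by rw [hp0]
      _ ≤ c * σ ⟨n - 1, Nat.sub_lt hn one_pos⟩ := mul_le_mul_of_nonneg_left hlast hc0.le
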